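/- A commutative ring R has stable range 1.5 if and only if for every triple (a,b,c) ∈ R³ such that (a,b) is unimodular and c ≠ 0, there exists r ∈ R such that (a+br, c) is unimodular. -/
import Mathlib

/-- `R` has stable range 1.5: for every unimodular triple `(a, b, c)` with `c ≠ 0`
there exists `r` such that `(a + b * r, c)` is unimodular. -/
def StableRange15 (R : Type*) [CommRing R] : Prop :=
  ∀ a b c : R, Ideal.span {a, b, c} = ⊤ → c ≠ 0 →
    ∃ r : R, Ideal.span {a + b * r, c} = ⊤

theorem stmt11 (R : Type*) [CommRing R] :
    StableRange15 R ↔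
      ∀ a b c : R, Ideal.span {a, b} = ⊤ → c ≠ 0 →
        ∃ r : R, Ideal.span {a + b * r, c} = ⊤ := by
  constructor
  · intro H a b c hab hc
    apply H a b c _ hc
    rw [eq_top_iff, ← hab]
    apply Ideal.span_mono
    intro x hx
    rcases hx with h | h
    · exact Or.inl h
    · exact Or.inr (Or.inl h)
  · intro H a b c habc hc
    have h1 : (1 : R) ∈ Ideal.span ({a, b, c} : Set R) := by rw [habc]; trivial
    rw [show ({a, b, c} : Set R) = insert a {b, c} from rfl,
      Ideal.mem_span_insert] at h1
    obtain ⟨x, w, hw, hxw⟩ := h1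
    rw [Ideal.mem_span_pair] at hw
    obtain ⟨y, z, hyz⟩ := hw
    -- pair (a, y*b + z*c) is unimodular
    have hpair : Ideal.span ({a, y * b + z * c} : Set R) = ⊤ := by
      rw [Ideal.eq_top_iff_one, Ideal.mem_span_pair]
      exact ⟨x, 1, by linear_combination -hxw + hyz⟩
    obtain ⟨r, hr⟩ := H a (y * b + z * c) c hpair hc
    refine ⟨y * r, ?_⟩
    rw [eq_top_iff, ← hr]
    apply Ideal.span_le.mpr
    intro t ht
    rcases ht with h | h
    · subst h
      have : a + (y * b + z * c) * r = (a + b * (y * r)) + c * (z * r) := by ring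
      rw [this]
      exact add_mem (Ideal.subset_span (Or.inl rfl))
        (Ideal.mul_mem_right _ _ (Ideal.subset_span (Or.inr rfl)))
    · simp only [Set.mem_singleton_iff] at h
      subst h
      exact Ideal.subset_span (Or.inr rfl)
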